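/- arXiv:math/0512562 — 3 statements merged into one kernel-verified Lean document; each statement's English description precedes it below -/
import Mathlib

section
/- Let G: C₁ → C₂ be an exact functor between abelian categories such that for all objects X, Y of C₁ the induced maps Hom(X,Y) → Hom(G X, G Y) and Ext¹(X,Y) → Ext¹(G X, G Y) are bijections. If G admits a right adjoint F which is conservative (F X ≠ 0 whenever X ≠ 0), then G is an equivalence of categories. -/
open CategoryTheory Limits

/-- An extension of `X` by `Y` in an abelian category:
a short exact sequence `0 → Y → E → X → 0`. -/
structure Extension {C : Type*} [Category C] [Abelian C] (X Y : C) where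
  E : C
  i : Y ⟶ E
  p : E ⟶ X
  w : i ≫ p = 0
  shortExact : (ShortComplex.mk i p w).ShortExact

/-- Two extensions are equivalent if there is an isomorphism between the middle
terms commuting with the structure maps.  `Ext¹(X, Y)` is the set of equivalence
classes of extensions of `X` by `Y` under this relation. -/
def Extension.Equiv {C : Type*} [Category C] [Abelian C] {X Y : C}
    (e₁ e₂ : Extension X Y) : Prop :=
  ∃ φ : e₁.E ≅ e₂.E, e₁.i ≫ φ.hom = e₂.i ∧ φ.hom ≫ e₂.p = e₁.p

/-- The image of an extension under an exact functor. -/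
noncomputable def Extension.map {C₁ : Type*} {C₂ : Type*} [Category C₁] [Category C₂]
    [Abelian C₁] [Abelian C₂] {X Y : C₁} (e : Extension X Y) (G : C₁ ⥤ C₂)
    [G.Additive] [PreservesFiniteLimits G] [PreservesFiniteColimits G] :
    Extension (G.obj X) (G.obj Y) where
  E := G.obj e.E
  i := G.map e.i
  p := G.map e.p
  w := by rw [← G.map_comp, e.w]; simp
  shortExact := e.shortExact.map_of_exact G

/-- Let `G : C₁ ⥤ C₂` be an exact functor between abelian categories
such that the induced maps `Hom(X, Y) → Hom(G X, G Y)` are bijections (i.e. `G` is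
fully faithful) and the induced maps `Ext¹(X, Y) → Ext¹(G X, G Y)` are bijections
(stated as: the induced map on equivalence classes of extensions is surjective and
injective).  If `G` admits a right adjoint `F` which is conservative
(`F X ≠ 0` whenever `X ≠ 0`), then `G` is an equivalence of categories. -/
theorem isEquivalence_of_fullyFaithful_ext_bijective_conservative_rightAdjoint
    {C₁ : Type*} {C₂ : Type*} [Category C₁] [Category C₂]
    [Abelian C₁] [Abelian C₂]
    (G : C₁ ⥤ C₂) [G.Additive] [PreservesFiniteLimits G] [PreservesFiniteColimits G]
    [G.Full] [G.Faithful]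
    (hExtSurj : ∀ (X Y : C₁) (e' : Extension (G.obj X) (G.obj Y)),
      ∃ e : Extension X Y, (e.map G).Equiv e')
    (hExtInj : ∀ (X Y : C₁) (e₁ e₂ : Extension X Y),
      (e₁.map G).Equiv (e₂.map G) → e₁.Equiv e₂)
    (F : C₂ ⥤ C₁) (adj : G ⊣ F)
    (hF : ∀ X : C₂, IsZero (F.obj X) → IsZero X) :
    G.IsEquivalence := by
  haveI : PreservesLimits F := adj.rightAdjoint_preservesLimits
  -- Step 1: each counit component is a monomorphism.
  have hmono : ∀ A : C₂, Mono (adj.counit.app A) := by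
    intro A
    have hiso : IsIso (F.map (adj.counit.app A)) := by
      have h := adj.right_triangle_components A
      haveI : IsIso (adj.unit.app (F.obj A) ≫ F.map (adj.counit.app A)) := by
        rw [h]; exact IsIso.id _
      exact IsIso.of_isIso_comp_left (adj.unit.app (F.obj A)) (F.map (adj.counit.app A))
    have hz : F.map (kernel.ι (adj.counit.app A)) = 0 := by
      have h0 : F.map (kernel.ι (adj.counit.app A)) ≫ F.map (adj.counit.app A) = 0 := by
        rw [← F.map_comp, kernel.condition, F.map_zero]
      exact (cancel_mono (F.map (adj.counit.app A))).1 (by simpa using h0)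
    have : IsZero (F.obj (kernel (adj.counit.app A))) :=
      IsZero.of_mono_eq_zero (F.map (kernel.ι (adj.counit.app A))) hz
    exact Preadditive.mono_of_isZero_kernel _ (hF _ this)
  -- Step 2: every map from an object in the image of `G` to the cokernel of a
  -- counit component is zero.
  have hzero : ∀ (A : C₂) (B : C₁) (g : G.obj B ⟶ cokernel (adj.counit.app A)), g = 0 := by
    intro A B g
    haveI := hmono A
    -- the short exact sequence 0 → GFA → A → Q → 0
    have hS1 : (ShortComplex.mk (adj.counit.app A) (cokernel.π (adj.counit.app A))
        (cokernel.condition _)).ShortExact :=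
      ShortComplex.ShortExact.mk'
        (ShortComplex.exact_of_g_is_cokernel _ (cokernelIsCokernel _))
        (hmono A) inferInstance
    -- pull it back along `g`
    set π := cokernel.π (adj.counit.app A) with hπdef
    have wk : (0 : G.obj (F.obj A) ⟶ G.obj B) ≫ g = adj.counit.app A ≫ π := by
      rw [zero_comp, cokernel.condition]
    set k : G.obj (F.obj A) ⟶ pullback g π := pullback.lift 0 (adj.counit.app A) wk with hkdef
    have hk2 : k ≫ pullback.snd g π = adj.counit.app A := pullback.lift_snd _ _ _
    have hk1 : k ≫ pullback.fst g π = 0 := pullback.lift_fst _ _ _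
    haveI : Mono k := mono_of_mono_fac hk2
    -- `k` is a kernel of `pullback.fst`
    have hker : IsLimit (KernelFork.ofι k hk1) := by
      refine KernelFork.IsLimit.ofι' k hk1 (fun {T} t ht => ?_)
      have htπ : (t ≫ pullback.snd g π) ≫ π = 0 := by
        rw [Category.assoc, ← pullback.condition, ← Category.assoc, ht, zero_comp]
      obtain ⟨u, hu⟩ := KernelFork.IsLimit.lift' hS1.fIsKernel (t ≫ pullback.snd g π) htπ
      refine ⟨u, pullback.hom_ext ?_ ?_⟩
      · rw [Category.assoc, hk1, comp_zero, ht]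
      · rw [Category.assoc, hk2]; exact hu
    have hSP : (ShortComplex.mk k (pullback.fst g π) hk1).ShortExact :=
      ShortComplex.ShortExact.mk'
        (ShortComplex.exact_of_f_is_kernel _ hker) inferInstance inferInstance
    -- use Ext-surjectivity to realise the pullback as the image of an extension
    obtain ⟨e, φ, h1, h2⟩ := hExtSurj B (F.obj A)
      ⟨pullback g π, k, pullback.fst g π, hk1, hSP⟩
    dsimp [Extension.map] at h1 h2 φ
    -- the map `G e.E ⟶ A` factors through the counit, hence dies in the cokernel
    have hfac : (φ.hom ≫ pullback.snd g π) ≫ π = 0 := by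
      have hm := adj.homEquiv_counit
        (g := adj.homEquiv e.E _ (φ.hom ≫ pullback.snd g π))
      rw [Equiv.symm_apply_apply] at hm
      simp only [Functor.id_obj] at hm
      rw [hm, Category.assoc]
      have : adj.counit.app _ ≫ π = 0 := cokernel.condition _
      rw [this, comp_zero]
    have hpg : G.map e.p ≫ g = 0 := by
      rw [← h2, Category.assoc, pullback.condition, ← Category.assoc]
      exact hfac
    haveI : Epi (G.map e.p) := (e.map G).shortExact.epi_g
    rw [← cancel_epi (G.map e.p), hpg, comp_zero]
  -- Step 3: the cokernel of each counit component is zero, hence counit is iso.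
  have hiso : ∀ A : C₂, IsIso (adj.counit.app A) := by
    intro A
    have hεQ : adj.counit.app (cokernel (adj.counit.app A)) = 0 := hzero A _ _
    have hid : 𝟙 (F.obj (cokernel (adj.counit.app A))) = 0 := by
      rw [← adj.right_triangle_components, hεQ, F.map_zero, comp_zero]
    have hQ : IsZero (cokernel (adj.counit.app A)) :=
      hF _ ((IsZero.iff_id_eq_zero _).2 hid)
    haveI := hmono A
    haveI : Epi (adj.counit.app A) := Preadditive.epi_of_isZero_cokernel _ hQ
    exact isIso_of_mono_of_epi _
  haveI : G.EssSurj := ⟨fun A => ⟨F.obj A, ⟨@asIso _ _ _ _ _ (hiso A)⟩⟩⟩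
  exact { }
end

section
/- Let G: C₁ → C₂ be an exact functor between abelian categories with right adjoint F, and suppose the unit id → F∘G is an isomorphism. For any object X' of C₂, the kernel Y' of the counit G(F(X')) → X' satisfies F(Y') = 0. Hence if F is conservative, the counit is a monomorphism. -/
open CategoryTheory Limits ZeroObject

/-- Let `G : C₁ ⥤ C₂` be an exact functor between abelian categories
with right adjoint `F`, and suppose the unit `id → F ∘ G` is an isomorphism.
Then for any object `X'` of `C₂`, the kernel `Y'` of the counit `G (F X') ⟶ X'`
satisfies `F Y' = 0`; hence if `F` is conservative (reflects zero objects), the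
counit is a monomorphism. -/
theorem kernel_counit_vanishes_and_counit_mono
    {C₁ : Type*} {C₂ : Type*} [Category C₁] [Category C₂]
    [Abelian C₁] [Abelian C₂]
    (G : C₁ ⥤ C₂) [PreservesFiniteLimits G] [PreservesFiniteColimits G]
    (F : C₂ ⥤ C₁) (adj : G ⊣ F) [IsIso adj.unit] :
    (∀ X' : C₂, IsZero (F.obj (kernel (adj.counit.app X')))) ∧
      ((∀ Y : C₂, IsZero (F.obj Y) → IsZero Y) →
        ∀ X' : C₂, Mono (adj.counit.app X')) := by
  haveI : PreservesLimitsOfSize.{0,0} F := adj.rightAdjoint_preservesLimits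
  have hker : ∀ X' : C₂, IsZero (F.obj (kernel (adj.counit.app X'))) := by
    intro X'
    haveI : IsIso (adj.unit.app (F.obj X')) := inferInstance
    haveI : IsIso (F.map (adj.counit.app X')) :=
      isIso_of_hom_comp_eq_id (adj.unit.app (F.obj X')) (adj.right_triangle_components X')
    have e : F.obj (kernel (adj.counit.app X')) ≅ 0 :=
      (PreservesKernel.iso F (adj.counit.app X')).trans
        (kernel.ofMono (F.map (adj.counit.app X')))
    exact (isZero_zero C₁).of_iso e
  refine ⟨hker, fun hcons X' => ?_⟩
  have hz : IsZero (kernel (adj.counit.app X')) := hcons _ (hker X')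
  have : kernel.ι (adj.counit.app X') = 0 := hz.eq_zero_of_src _
  exact Preadditive.mono_of_kernel_iso_zero (hz.isoZero)
end

section
/- Let C be an abelian category closed under filtered colimits, and C⁰ a full subcategory equivalent to a small category, closed under cokernels of epimorphisms between its objects, such that every object of C⁰ is compact (Hom(X,−) commutes with filtered colimits for X ∈ C⁰) and every object of C is a filtered colimit of objects of C⁰. Then any contravariant left-exact functor F: C^op → Vect that sends colimits in C to limits is representable. -/
open CategoryTheory Limits Opposite

universe v u

/-- Let `C` be an abelian category closed under filtered colimits and
`C⁰` (given by a predicate `S`) a full subcategory equivalent to a small category,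
closed under cokernels of epimorphisms between its objects, such that every object
of `C⁰` is compact (its `Hom(X, −)` commutes with filtered colimits) and every
object of `C` is a filtered colimit of objects of `C⁰`.  Then any contravariant
left-exact functor `F : Cᵒᵖ ⥤ Vect` sending colimits in `C` to limits is
representable. -/
theorem representable_of_leftExact_sends_colimits_to_limits
    {C : Type u} [Category.{v} C] [Abelian C] [HasFilteredColimitsOfSize.{v, v} C]
    (S : C → Prop)
    (hsmall : Small.{v} (ObjectProperty.FullSubcategory S))
    (hcoker : ∀ (X Y : C) (f : X ⟶ Y), Epi f → S X → S Y → S (cokernel f))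
    (hcompact : ∀ X : C, S X →
      Nonempty (PreservesFilteredColimitsOfSize.{v, v} (coyoneda.obj (op X))))
    (hgen : ∀ Y : C, ∃ (J : Type v) (_ : SmallCategory J) (_ : IsFiltered J)
      (D : J ⥤ C) (c : Cocone D), (∀ j, S (D.obj j)) ∧
        Nonempty (IsColimit c) ∧ Nonempty (c.pt ≅ Y))
    (F : Cᵒᵖ ⥤ ModuleCat.{v} ℂ)
    [PreservesFiniteLimits F] [PreservesLimitsOfSize.{v, v} F] :
    ∃ Z : C, Nonempty ((F ⋙ forget (ModuleCat.{v} ℂ)) ≅ yoneda.obj Z) := by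
  -- C is cocomplete
  have hcolim : HasColimitsOfSize.{v, v} C := has_colimits_of_finite_and_filtered
  -- the set of objects of the subcategory
  set 𝒢 : Set C := setOf S with h𝒢def
  have hsmall𝒢 : Small.{v} 𝒢 := @small_map _ _ hsmall (Equiv.ofBijective
      (fun x : 𝒢 => (⟨x.1, x.2⟩ : ObjectProperty.FullSubcategory S))
      ⟨fun a b h => by
          apply Subtype.ext
          exact congrArg ObjectProperty.FullSubcategory.obj h,
        fun y => ⟨⟨y.obj, y.property⟩, rfl⟩⟩)
  -- the subcategory separates
  have hsep : ObjectProperty.IsSeparating 𝒢 := by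
    intro Y Z f g h
    obtain ⟨J, _, _, D, c, hS, ⟨hc⟩, ⟨e⟩⟩ := hgen Y
    have key : ∀ j, (c.ι.app j ≫ e.hom) ≫ f = (c.ι.app j ≫ e.hom) ≫ g := fun j =>
      h (D.obj j) (hS j) (c.ι.app j ≫ e.hom)
    have := hc.hom_ext (fun j => by simpa using key j)
    calc f = e.inv ≫ (e.hom ≫ f) := by simp
    _ = e.inv ≫ (e.hom ≫ g) := by rw [this]
    _ = g := by simp
  -- well-poweredness
  have : WellPowered.{v} C := @wellPowered_of_isDetecting _ _ _ 𝒢 hsmall𝒢 _ hsep.isDetecting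
  have : WellPowered.{v} Cᵒᵖ := inferInstance
  -- the type-valued functor
  let G : Cᵒᵖ ⥤ Type v := F ⋙ forget (ModuleCat.{v} ℂ)
  have hGlim : PreservesLimitsOfSize.{v, v} G := by infer_instance
  have hH : PreservesColimitsOfSize.{v, v} G.rightOp :=
    preservesColimitsOfSize_rightOp G
  have : G.rightOp.IsLeftAdjoint :=
    by haveI : ObjectProperty.Small.{v} 𝒢 := hsmall𝒢; exact isLeftAdjoint_of_preservesColimits_of_isSeparating hsep G.rightOp
  let adj := Adjunction.ofIsLeftAdjoint G.rightOp
  refine ⟨G.rightOp.rightAdjoint.obj (op PUnit), ⟨NatIso.ofComponents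
    (fun X => Equiv.toIso ((((Equiv.funUnique PUnit (G.obj X)).symm).trans TypeCat.homEquiv.symm).trans
      (((opEquiv (G.rightOp.obj X.unop) (op PUnit)).symm).trans
        (adj.homEquiv X.unop (op PUnit))))) ?_⟩⟩
  intro X Y f
  ext x
  show adj.homEquiv Y.unop (op PUnit) (Quiver.Hom.op (TypeCat.ofHom fun _ => G.map f x))
      = f.unop ≫ adj.homEquiv X.unop (op PUnit) (Quiver.Hom.op (TypeCat.ofHom fun _ => x))
  rw [← Adjunction.homEquiv_naturality_left]
  congr 1
end
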